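/- For bi-periodic Fibonacci polynomials and m, n ≥ 1 with m + n even, q_{m+n}(x) = q_m(x) q_{n+1}(x) + q_{m−1}(x) q_n(x). -/
import Mathlib


/-- Bi-periodic Fibonacci polynomials (evaluated at x): q 0 = 0, q 1 = 1,
    q n = a*x*q (n-1) + q (n-2) if n odd, q n = b*x*q (n-1) + q (n-2) if n even. -/
def bpFibP (a b x : ℝ) : ℕ → ℝ
  | 0 => 0
  | 1 => 1
  | n + 2 => (if Even (n + 2) then b * x else a * x) * bpFibP a b x (n + 1) + bpFibP a b x n

lemma bpFibP_rec (a b x : ℝ) (k : ℕ) :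
    bpFibP a b x (k + 2) =
      (if Even (k + 2) then b * x else a * x) * bpFibP a b x (k + 1) + bpFibP a b x k := rfl

theorem bpFibP_add_even' (a b x : ℝ) (ha : a ≠ 0) (hb : b ≠ 0) (m n : ℕ)
    (hm : 1 ≤ m) (hn : 1 ≤ n) (h : Even (m + n)) :
    bpFibP a b x (m + n) =
      bpFibP a b x m * bpFibP a b x (n + 1) + bpFibP a b x (m - 1) * bpFibP a b x n := by
  induction m, hm using Nat.le_induction generalizing n with
  | base =>
    rw [add_comm]
    simp [bpFibP]
  | succ m hm ih =>
    rcases Nat.exists_eq_succ_of_ne_zero (by omega : m ≠ 0) with ⟨j, rfl⟩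
    have key := ih (n + 1) (by omega) (by
      have e : j + 1 + (n + 1) = j + 1 + 1 + n := by omega
      rw [e]; exact h)
    have e : j + 1 + 1 + n = j + 1 + (n + 1) := by omega
    rw [e, key]
    have e2 : n + 1 + 1 = n + 2 := rfl
    have e3 : j + 1 + 1 = j + 2 := rfl
    have e4 : j + 1 - 1 = j := rfl
    have e5 : j + 1 + 1 - 1 = j + 1 := rfl
    rw [e2, e3, e4, e5, bpFibP_rec a b x n, bpFibP_rec a b x j]
    have hiff : Even (j + 2) ↔ Even (n + 2) := by
      simp only [Nat.even_iff] at h ⊢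
      omega
    rw [if_congr hiff rfl rfl]
    by_cases hc : Even (n + 2) <;> simp [hc] <;> ring
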